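/- Incompatibility is witnessed at a constructor clash: if ground type t is incompatible with type s (which may contain holes), then s and t disagree at some position where s has a non-hole constructor, i.e., there is a common position p such that the head constructors of s and t at p are both defined, neither is a hole, and they differ. -/
import Mathlib


/-- Types: t ::= Int | Bool | t × t | Tree t | Fun | α (type hole). -/
inductive Ty : Type where
  | int : Ty
  | bool : Ty
  | fn : Ty
  | prod (t₁ t₂ : Ty) : Ty
  | tree (t : Ty) : Ty
  | hole (α : ℕ) : Ty
deriving DecidableEq

/-- A type substitution: a (partial) map from type holes to types. -/
abbrev TSub := ℕ → Option Ty

/-- Homomorphic application of a type substitution. -/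
def Ty.subst (θ : TSub) : Ty → Ty
  | .int => .int
  | .bool => .bool
  | .fn => .fn
  | .prod t₁ t₂ => .prod (t₁.subst θ) (t₂.subst θ)
  | .tree t => .tree (t.subst θ)
  | .hole α => (θ α).getD (.hole α)

/-- s ∼ t : some substitution maps both to the same type. -/
def Compatible (s t : Ty) : Prop := ∃ θ : TSub, s.subst θ = t.subst θ

/-- s ⊑ t : some substitution maps t to s. -/
def Refines (s t : Ty) : Prop := ∃ θ : TSub, s = t.subst θ

/-- Ground types contain no type holes. -/
def Ty.Ground : Ty → Prop
  | .int => True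
  | .bool => True
  | .fn => True
  | .prod t₁ t₂ => t₁.Ground ∧ t₂.Ground
  | .tree t => t.Ground
  | .hole _ => False

/-- The set of type holes occurring in a type. -/
def Ty.holes : Ty → Set ℕ
  | .int => ∅
  | .bool => ∅
  | .fn => ∅
  | .prod t₁ t₂ => t₁.holes ∪ t₂.holes
  | .tree t => t.holes
  | .hole α => {α}

/-- Number of occurrences of a hole in a type. -/
def Ty.occs : Ty → ℕ → ℕ
  | .int, _ => 0
  | .bool, _ => 0
  | .fn, _ => 0
  | .prod t₁ t₂, α => t₁.occs α + t₂.occs α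
  | .tree t, α => t.occs α
  | .hole β, α => if β = α then 1 else 0

/-- The subterm of a type at a position (a path into the term tree). -/
def Ty.subAt : Ty → List ℕ → Option Ty
  | t, [] => some t
  | .prod t₁ _, 0 :: p => t₁.subAt p
  | .prod _ t₂, 1 :: p => t₂.subAt p
  | .tree t, 0 :: p => t.subAt p
  | _, _ => none

/-- The head constructor of a type, as a tag. -/
def Ty.head : Ty → ℕ
  | .int => 0
  | .bool => 1
  | .fn => 2
  | .prod _ _ => 3
  | .tree _ => 4
  | .hole _ => 5

/-- A type is a hole. -/
def Ty.IsHole : Ty → Prop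
  | .hole _ => True
  | _ => False

lemma Ty.subst_ground (t : Ty) (ht : t.Ground) (θ : TSub) : t.subst θ = t := by
  induction t with
  | int => rfl
  | bool => rfl
  | fn => rfl
  | prod t₁ t₂ ih₁ ih₂ =>
      simp [Ty.subst, ih₁ ht.1, ih₂ ht.2]
  | tree t ih => simp [Ty.subst, ih ht]
  | hole α => exact absurd ht id

lemma Ty.subst_congr (s : Ty) (θ θ' : TSub)
    (h : ∀ α, s.occs α ≠ 0 → θ α = θ' α) : s.subst θ = s.subst θ' := by
  induction s with
  | int => rfl
  | bool => rfl
  | fn => rfl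
  | prod s₁ s₂ ih₁ ih₂ =>
      have h₁ : ∀ α, s₁.occs α ≠ 0 → θ α = θ' α := fun α hα =>
        h α (by simp [Ty.occs]; omega)
      have h₂ : ∀ α, s₂.occs α ≠ 0 → θ α = θ' α := fun α hα =>
        h α (by simp [Ty.occs]; omega)
      simp [Ty.subst, ih₁ h₁, ih₂ h₂]
  | tree s ih => simp [Ty.subst, ih (fun α hα => h α hα)]
  | hole β =>
      have := h β (by simp [Ty.occs])
      simp [Ty.subst, this]

/-- Incompatibility with a ground type is witnessed by a
constructor clash: if t is ground, s is linear in its holes, and s ≁ t,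
then at some common position both types carry non-hole constructors whose
heads differ. -/
theorem incompatibility_witnessed_by_clash (s t : Ty)
    (ht : t.Ground) (hlin : ∀ α : ℕ, s.occs α ≤ 1)
    (hinc : ¬ Compatible s t) :
    ∃ (p : List ℕ) (s' t' : Ty),
      s.subAt p = some s' ∧ t.subAt p = some t' ∧
      ¬ s'.IsHole ∧ ¬ t'.IsHole ∧ s'.head ≠ t'.head := by
  induction s generalizing t with
  | hole α =>
      exact absurd ⟨fun β => if β = α then some t else none, by
        simp [Ty.subst, Ty.subst_ground t ht]⟩ hinc
  | int =>
      cases t with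
      | int => exact absurd ⟨fun _ => none, by simp [Ty.subst_ground _ ht]⟩ hinc
      | hole β => exact absurd ht id
      | _ => exact ⟨[], _, _, rfl, rfl, (by simp [Ty.IsHole]), (by simp [Ty.IsHole]),
              (by simp [Ty.head])⟩
  | bool =>
      cases t with
      | bool => exact absurd ⟨fun _ => none, by simp [Ty.subst_ground _ ht]⟩ hinc
      | hole β => exact absurd ht id
      | _ => exact ⟨[], _, _, rfl, rfl, (by simp [Ty.IsHole]), (by simp [Ty.IsHole]),
              (by simp [Ty.head])⟩
  | fn =>
      cases t with
      | fn => exact absurd ⟨fun _ => none, by simp [Ty.subst_ground _ ht]⟩ hinc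
      | hole β => exact absurd ht id
      | _ => exact ⟨[], _, _, rfl, rfl, (by simp [Ty.IsHole]), (by simp [Ty.IsHole]),
              (by simp [Ty.head])⟩
  | tree s ih =>
      cases t with
      | tree t =>
          have hlin' : ∀ α, s.occs α ≤ 1 := fun α => hlin α
          have hinc' : ¬ Compatible s t := by
            rintro ⟨θ, hθ⟩
            exact hinc ⟨θ, by simp [Ty.subst, hθ]⟩
          obtain ⟨p, s', t', hs, htp, h1, h2, h3⟩ := ih t ht hlin' hinc'
          exact ⟨0 :: p, s', t', hs, htp, h1, h2, h3⟩
      | hole β => exact absurd ht id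
      | _ => exact ⟨[], _, _, rfl, rfl, (by simp [Ty.IsHole]), (by simp [Ty.IsHole]),
              (by simp [Ty.head])⟩
  | prod s₁ s₂ ih₁ ih₂ =>
      cases t with
      | prod t₁ t₂ =>
          have hl₁ : ∀ α, s₁.occs α ≤ 1 := fun α => by
            have := hlin α; simp [Ty.occs] at this; omega
          have hl₂ : ∀ α, s₂.occs α ≤ 1 := fun α => by
            have := hlin α; simp [Ty.occs] at this; omega
          by_cases hc₁ : Compatible s₁ t₁
          · by_cases hc₂ : Compatible s₂ t₂
            · exfalso
              obtain ⟨θ₁, hθ₁⟩ := hc₁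
              obtain ⟨θ₂, hθ₂⟩ := hc₂
              rw [Ty.subst_ground _ ht.1] at hθ₁
              rw [Ty.subst_ground _ ht.2] at hθ₂
              refine hinc ⟨fun α => if s₁.occs α ≠ 0 then θ₁ α else θ₂ α, ?_⟩
              have e₁ : s₁.subst (fun α => if s₁.occs α ≠ 0 then θ₁ α else θ₂ α)
                  = s₁.subst θ₁ := Ty.subst_congr _ _ _ (fun α hα => by simp [hα])
              have e₂ : s₂.subst (fun α => if s₁.occs α ≠ 0 then θ₁ α else θ₂ α)
                  = s₂.subst θ₂ := Ty.subst_congr _ _ _ (fun α hα => by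
                    have := hlin α; simp [Ty.occs] at this
                    have h1 : s₁.occs α = 0 := by omega
                    simp [h1])
              show Ty.prod _ _ = Ty.subst _ (Ty.prod t₁ t₂)
              rw [Ty.subst_ground _ (show (Ty.prod t₁ t₂).Ground from ht)]
              show Ty.prod _ _ = Ty.prod t₁ t₂
              rw [e₁, e₂, hθ₁, hθ₂]
            · obtain ⟨p, s', t', hs, htp, h1, h2, h3⟩ := ih₂ t₂ ht.2 hl₂ hc₂
              exact ⟨1 :: p, s', t', hs, htp, h1, h2, h3⟩
          · obtain ⟨p, s', t', hs, htp, h1, h2, h3⟩ := ih₁ t₁ ht.1 hl₁ hc₁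
            exact ⟨0 :: p, s', t', hs, htp, h1, h2, h3⟩
      | hole β => exact absurd ht id
      | _ => exact ⟨[], _, _, rfl, rfl, (by simp [Ty.IsHole]), (by simp [Ty.IsHole]),
              (by simp [Ty.head])⟩
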